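/- Let A be a finite-dimensional ℤ/2ℤ-graded associative algebra over a field of characteristic zero with an odd invariant scalar product g, let (e_μ), (e^μ) be homogeneous dual bases with g(e^μ, e_ν) = δ^μ_ν, and let I be an odd anti-self-adjoint operator on A. Then for every homogeneous a ∈ A: Σ_μ (−1)^{|e^μ|(|a|+1)} (I e^μ)·a·e_μ + Σ_μ (−1)^{|e^μ|(|a|+1) + |a| + |e^μ|} e^μ·a·(I e_μ) = 0. -/

import Mathlib

/-- A finite-dimensional ℤ/2ℤ-graded associative algebra `A = A₀ ⊕ A₁` (possibly
non-unital) with an odd invariant scalar product `g`: `g` is non-degenerate, vanishes on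
`A₀ × A₀` and `A₁ × A₁`, is invariant (`g(ab,c) = g(a,bc)`) and supersymmetric (which,
given the vanishing on equal parities, amounts to plain symmetry). -/
structure OddFrob (k A : Type*) [Field k] [NonUnitalRing A] [Module k A]
    [SMulCommClass k A A] [IsScalarTower k A A] where
  A0 : Submodule k A
  A1 : Submodule k A
  compl : IsCompl A0 A1
  mul00 : ∀ x ∈ A0, ∀ y ∈ A0, x * y ∈ A0
  mul01 : ∀ x ∈ A0, ∀ y ∈ A1, x * y ∈ A1
  mul10 : ∀ x ∈ A1, ∀ y ∈ A0, x * y ∈ A1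
  mul11 : ∀ x ∈ A1, ∀ y ∈ A1, x * y ∈ A0
  g : A →ₗ[k] A →ₗ[k] k
  nondeg : ∀ x, (∀ y, g x y = 0) → x = 0
  zero00 : ∀ x ∈ A0, ∀ y ∈ A0, g x y = 0
  zero11 : ∀ x ∈ A1, ∀ y ∈ A1, g x y = 0
  invar : ∀ x y z, g (x * y) z = g x (y * z)
  symm : ∀ x y, g x y = g y x

variable {k A : Type*} [Field k] [NonUnitalRing A] [Module k A]
  [SMulCommClass k A A] [IsScalarTower k A A]

/-- `a` is homogeneous of parity `p` (mod 2). -/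
def OddFrob.Homog (S : OddFrob k A) (p : ℕ) (a : A) : Prop :=
  if p % 2 = 0 then a ∈ S.A0 else a ∈ S.A1

/-- Homogeneous dual bases `(e_μ)`, `(e^μ)` of `A`: `e^μ = f μ` is homogeneous of parity
`q μ`, `e_μ = e μ` of the opposite parity, and `g(e^μ, e_ν) = δ^μ_ν`. -/
def OddFrob.DualBases (S : OddFrob k A) {ι : Type*} [Fintype ι] [DecidableEq ι]
    (e : Module.Basis ι k A) (f : ι → A) (q : ι → ℕ) : Prop :=
  (∀ μ, S.Homog (q μ) (f μ)) ∧ (∀ μ, S.Homog (q μ + 1) (e μ)) ∧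
  (∀ μ ν, S.g (f μ) (e ν) = if μ = ν then 1 else 0)

/-- `I` is odd: it exchanges the even and odd parts. -/
def OddFrob.IsOddOp (S : OddFrob k A) (I : A →ₗ[k] A) : Prop :=
  (∀ x ∈ S.A0, I x ∈ S.A1) ∧ (∀ x ∈ S.A1, I x ∈ S.A0)

/-- `I` is anti-self-adjoint: `g(Ia,b) + (−1)^{|a|} g(a,Ib) = 0` for homogeneous `a`. -/
def OddFrob.IsASA (S : OddFrob k A) (I : A →ₗ[k] A) : Prop :=
  ∀ (p : ℕ) (x : A), S.Homog p x → ∀ y, S.g (I x) y + (-1 : k) ^ p * S.g x (I y) = 0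

/-- For an odd anti-self-adjoint operator `I`, homogeneous dual bases
and homogeneous `a`:
`Σ_μ (−1)^{|e^μ|(|a|+1)} (I e^μ)·a·e_μ + Σ_μ (−1)^{|e^μ|(|a|+1)+|a|+|e^μ|} e^μ·a·(I e_μ) = 0`. -/
theorem dual_bases_I_cancellation
    {k A : Type*} [Field k] [CharZero k] [NonUnitalRing A] [Module k A]
    [SMulCommClass k A A] [IsScalarTower k A A] [FiniteDimensional k A]
    (S : OddFrob k A) {ι : Type*} [Fintype ι] [DecidableEq ι]
    (e : Module.Basis ι k A) (f : ι → A) (q : ι → ℕ) (hdb : S.DualBases e f q)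
    (I : A →ₗ[k] A) (hodd : S.IsOddOp I) (hasa : S.IsASA I)
    (pa : ℕ) (a : A) (ha : S.Homog pa a) :
    (∑ μ, (-1 : k) ^ (q μ * (pa + 1)) • (I (f μ) * a * e μ))
      + ∑ μ, (-1 : k) ^ (q μ * (pa + 1) + pa + q μ) • (f μ * a * I (e μ)) = 0 := by
  obtain ⟨hf, he, hfe⟩ := hdb
  -- expansion of any element in the basis e, with coefficients g (f ν) x
  have expand_e : ∀ x : A, x = ∑ ν, S.g (f ν) x • e ν := by
    intro x
    have hrepr : ∀ ν, S.g (f ν) x = e.repr x ν := by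
      intro ν
      conv_lhs => rw [← e.sum_repr x]
      simp [map_sum, map_smul, smul_eq_mul, hfe, Finset.sum_ite_eq, -Module.Basis.sum_repr]
    conv_lhs => rw [← e.sum_repr x]
    exact Finset.sum_congr rfl fun ν _ => by rw [hrepr]
  -- expansion of any element over f, with coefficients g x (e ν)
  have expand_f : ∀ x : A, x = ∑ ν, S.g x (e ν) • f ν := by
    intro x
    have hz : ∀ τ, S.g (x - ∑ ν, S.g x (e ν) • f ν) (e τ) = 0 := by
      intro τ
      simp only [map_sub, map_sum, map_smul, LinearMap.sub_apply, LinearMap.sum_apply,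
        LinearMap.smul_apply, smul_eq_mul, hfe, mul_ite, mul_one, mul_zero,
        Finset.sum_ite_eq', Finset.mem_univ, if_true]
      ring
    have h0 : x - ∑ ν, S.g x (e ν) • f ν = 0 := by
      apply S.nondeg
      intro y
      conv_lhs => rw [expand_e y]
      simp only [map_sum, map_smul, smul_eq_mul, hz, mul_zero, Finset.sum_const_zero]
    exact (sub_eq_zero.mp h0)
  -- parity lemmas
  have gzero : ∀ (p r : ℕ) (x y : A), p % 2 = r % 2 → S.Homog p x → S.Homog r y →
      S.g x y = 0 := by
    intro p r x y hpr hx hy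
    unfold OddFrob.Homog at hx hy
    rcases Nat.mod_two_eq_zero_or_one p with h | h
    · rw [h] at hx; rw [hpr] at h; rw [h] at hy
      simp only [if_pos rfl] at hx hy
      exact S.zero00 x hx y hy
    · rw [h] at hx; rw [hpr] at h; rw [h] at hy
      simp only [Nat.one_ne_zero, if_false] at hx hy
      exact S.zero11 x hx y hy
  have hI : ∀ (p : ℕ) (x : A), S.Homog p x → S.Homog (p + 1) (I x) := by
    intro p x hx
    unfold OddFrob.Homog at hx ⊢
    rcases Nat.mod_two_eq_zero_or_one p with h | h
    · have h1 : (p + 1) % 2 = 1 := by omega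
      rw [h] at hx; rw [h1]
      simp only [if_pos rfl] at hx
      simp only [Nat.one_ne_zero, if_false]
      exact hodd.1 x hx
    · have h1 : (p + 1) % 2 = 0 := by omega
      rw [h] at hx; rw [h1]
      simp only [Nat.one_ne_zero, if_false] at hx
      simp only [if_pos rfl]
      exact hodd.2 x hx
  have homog_shift : ∀ (p r : ℕ) (x : A), p % 2 = r % 2 → S.Homog p x → S.Homog r x := by
    intro p r x hpr hx
    unfold OddFrob.Homog at hx ⊢
    rw [← hpr]
    exact hx
  have hIe : ∀ μ, S.Homog (q μ) (I (e μ)) := fun μ =>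
    homog_shift (q μ + 1 + 1) (q μ) _ (by omega) (hI (q μ + 1) (e μ) (he μ))
  -- the key coefficient cancellation
  have key : ∀ μ ν, (-1 : k) ^ (q ν * (pa + 1)) * S.g (I (f ν)) (e μ)
      + (-1 : k) ^ (q μ * (pa + 1) + pa + q μ) * S.g (f ν) (I (e μ)) = 0 := by
    intro μ ν
    have hASA := hasa (q ν) (f ν) (hf ν) (e μ)
    by_cases hq : q ν % 2 = q μ % 2
    · have hM : S.g (f ν) (I (e μ)) = 0 := gzero _ _ _ _ hq (hf ν) (hIe μ)
      have hN : S.g (I (f ν)) (e μ) = 0 := by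
        rw [hM] at hASA
        simpa using hASA
      rw [hM, hN]; ring
    · have hN : S.g (I (f ν)) (e μ) = -((-1 : k) ^ (q ν) * S.g (f ν) (I (e μ))) := by
        exact eq_neg_of_add_eq_zero_left hASA
      rw [hN]
      have hsign : (-1 : k) ^ (q μ * (pa + 1) + pa + q μ)
          = (-1 : k) ^ (q ν * (pa + 1)) * (-1 : k) ^ (q ν) := by
        rw [← pow_add, neg_one_pow_eq_pow_mod_two,
          neg_one_pow_eq_pow_mod_two (n := q ν * (pa + 1) + q ν)]
        congr 1
        rcases Nat.mod_two_eq_zero_or_one (q μ) with h1 | h1 <;>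
          rcases Nat.mod_two_eq_zero_or_one (q ν) with h2 | h2 <;>
          rcases Nat.mod_two_eq_zero_or_one pa with h3 | h3 <;>
          simp [Nat.add_mod, Nat.mul_mod, h1, h2, h3] at hq ⊢
      rw [hsign]; ring
  -- rewrite each summand as a double sum over the basis monomials f ν * a * e μ
  have h1 : ∀ μ, (-1 : k) ^ (q μ * (pa + 1)) • (I (f μ) * a * e μ)
      = ∑ ν, ((-1 : k) ^ (q μ * (pa + 1)) * S.g (I (f μ)) (e ν)) • (f ν * a * e μ) := by
    intro μ
    conv_lhs => rw [expand_f (I (f μ))]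
    rw [Finset.sum_mul, Finset.sum_mul, Finset.smul_sum]
    refine Finset.sum_congr rfl fun ν _ => ?_
    rw [smul_mul_assoc, smul_mul_assoc, smul_smul]
  have h2 : ∀ μ, (-1 : k) ^ (q μ * (pa + 1) + pa + q μ) • (f μ * a * I (e μ))
      = ∑ ν, ((-1 : k) ^ (q μ * (pa + 1) + pa + q μ) * S.g (f ν) (I (e μ)))
          • (f μ * a * e ν) := by
    intro μ
    conv_lhs => rw [expand_e (I (e μ))]
    rw [Finset.mul_sum, Finset.smul_sum]
    refine Finset.sum_congr rfl fun ν _ => ?_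
    rw [mul_smul_comm, smul_smul]
  calc (∑ μ, (-1 : k) ^ (q μ * (pa + 1)) • (I (f μ) * a * e μ))
      + ∑ μ, (-1 : k) ^ (q μ * (pa + 1) + pa + q μ) • (f μ * a * I (e μ))
      = (∑ μ, ∑ ν, ((-1 : k) ^ (q ν * (pa + 1)) * S.g (I (f ν)) (e μ)) • (f μ * a * e ν))
        + ∑ μ, ∑ ν, ((-1 : k) ^ (q μ * (pa + 1) + pa + q μ) * S.g (f ν) (I (e μ)))
            • (f μ * a * e ν) := by
        rw [Finset.sum_congr rfl fun μ _ => h1 μ, Finset.sum_congr rfl fun μ _ => h2 μ,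
          Finset.sum_comm]
    _ = ∑ μ, ∑ ν, (((-1 : k) ^ (q ν * (pa + 1)) * S.g (I (f ν)) (e μ)
          + (-1 : k) ^ (q μ * (pa + 1) + pa + q μ) * S.g (f ν) (I (e μ)))
            • (f μ * a * e ν)) := by
        rw [← Finset.sum_add_distrib]
        refine Finset.sum_congr rfl fun μ _ => ?_
        rw [← Finset.sum_add_distrib]
        exact Finset.sum_congr rfl fun ν _ => (add_smul _ _ _).symm
    _ = 0 := by
        refine Finset.sum_eq_zero fun μ _ => Finset.sum_eq_zero fun ν _ => ?_
        rw [key μ ν, zero_smul]
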